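/- For the Grötzsch ring function μ (case a = 1/2), the strict superadditivity inequality μ(r) + μ(t) > μ(rt) holds for all r, t ∈ (0,1). -/

import Mathlib

open Real Filter Set Topology

/-- Pochhammer symbol (rising factorial) for real `x`. -/
noncomputable def poch (x : ℝ) (n : ℕ) : ℝ := (ascPochhammer ℝ n).eval x

/-- Generalized complete elliptic integral of the first kind. -/
noncomputable def Ka (a r : ℝ) : ℝ :=
  (π / 2) * ∑' n : ℕ, (poch a n * poch (1 - a) n / (n.factorial : ℝ) ^ 2) * r ^ (2 * n)

/-- Generalized complete elliptic integral of the second kind. -/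
noncomputable def Ea (a r : ℝ) : ℝ :=
  (π / 2) * ∑' n : ℕ, (poch (a - 1) n * poch (1 - a) n / (n.factorial : ℝ) ^ 2) * r ^ (2 * n)

/-- Generalized Grötzsch ring function. -/
noncomputable def muG (a r : ℝ) : ℝ :=
  π / (2 * Real.sin (π * a)) * (Ka a (Real.sqrt (1 - r ^ 2)) / Ka a r)

/-- Generalized Hersch–Pfluger distortion function. -/
noncomputable def phiHP (a K r : ℝ) : ℝ := Function.invFun (muG a) (muG a r / K)

/-- The function mₐ(r). -/
noncomputable def mA (a r : ℝ) : ℝ :=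
  2 / (π * Real.sin (π * a)) * (1 - r ^ 2) * Ka a (Real.sqrt (1 - r ^ 2)) * Ka a r

/-- Digamma function (as the logarithmic derivative of Γ). -/
noncomputable def psiDG (x : ℝ) : ℝ := deriv (fun t => Real.log (Real.Gamma t)) x

/-- Ramanujan constant R(a). -/
noncomputable def RamanujanR (a : ℝ) : ℝ :=
  -2 * Real.eulerMascheroniConstant - psiDG a - psiDG (1 - a)

noncomputable def cc (n : ℕ) : ℝ := (poch (1/2) n / (n.factorial : ℝ))^2

lemma poch_zero (x : ℝ) : poch x 0 = 1 := by simp [poch]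

lemma poch_succ (x : ℝ) (n : ℕ) : poch x (n+1) = poch x n * (x + n) := by
  simp [poch, ascPochhammer_succ_right, Polynomial.eval_mul]

lemma poch_half_pos (n : ℕ) : 0 < poch (1/2) n := by
  induction n with
  | zero => simp [poch_zero]
  | succ n ih => rw [poch_succ]; positivity

lemma cc_pos (n : ℕ) : 0 < cc n := by
  have := poch_half_pos n
  have : (0:ℝ) < (n.factorial : ℝ) := by positivity
  unfold cc; positivity

lemma cc_zero : cc 0 = 1 := by simp [cc, poch_zero]

lemma cc_succ (n : ℕ) : cc (n+1) = cc n * ((2*n+1)^2 / (4*(n+1)^2)) := by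
  have h1 : ((n+1).factorial : ℝ) = (n+1) * n.factorial := by
    rw [Nat.factorial_succ]; push_cast; ring
  have h2 : (n.factorial : ℝ) ≠ 0 := by positivity
  have h3 : ((n:ℝ)+1) ≠ 0 := by positivity
  unfold cc
  rw [poch_succ, h1]
  field_simp
  ring

lemma poch_half_le (n : ℕ) : poch (1/2) n ≤ (n.factorial : ℝ) := by
  induction n with
  | zero => simp [poch_zero]
  | succ n ih =>
    rw [poch_succ, Nat.factorial_succ]
    push_cast
    have h1 : (1:ℝ)/2 + n ≤ n + 1 := by linarith
    have := poch_half_pos n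
    have hf : (0:ℝ) < n.factorial := by positivity
    calc poch (1/2) n * (1/2 + n) ≤ (n.factorial : ℝ) * (n+1) := by
          apply mul_le_mul ih h1 (by positivity) (by positivity)
      _ = (n+1) * n.factorial := by ring

lemma cc_le_one (n : ℕ) : cc n ≤ 1 := by
  have h := poch_half_le n
  have hp := poch_half_pos n
  have hf : (0:ℝ) < n.factorial := by positivity
  have : poch (1/2) n / n.factorial ≤ 1 := by
    rw [div_le_one hf]; exact h
  have h0 : 0 ≤ poch (1/2) n / (n.factorial:ℝ) := by positivity
  calc cc n = (poch (1/2) n / n.factorial)^2 := rfl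
    _ ≤ 1^2 := by apply pow_le_pow_left₀ h0 this
    _ = 1 := one_pow 2

-- summability of the generic bound n^k * ρ^n style
lemma summable_aux (k : ℕ) {m : ℝ} (hm : |m| < 1) :
    Summable (fun n : ℕ => ((n:ℝ)+1)^k * |m| ^ n) := by
  have h : Summable (fun n : ℕ => ((n:ℝ)+1)^k * |m| ^ (n+1)) := by
    have := summable_pow_mul_geometric_of_norm_lt_one (R := ℝ) k (r := |m|) (by simpa using hm)
    have h2 := this.comp_injective (add_left_injective 1)
    apply h2.congr
    intro n
    simp [Function.comp]
  have h3 := h.mul_left (|m|⁻¹)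
  rcases eq_or_ne m 0 with rfl | hm0
  · apply summable_of_ne_finset_zero (s := {0})
    intro n hn
    have : n ≠ 0 := by simpa using hn
    simp [this, zero_pow this]
  · have habs : |m| ≠ 0 := by simpa using hm0
    refine h3.congr fun n => ?_
    field_simp
    ring


lemma summable_ps {a : ℕ → ℝ} {C : ℝ} {k : ℕ} (hb : ∀ n, |a n| ≤ C * ((n:ℝ)+1)^k)
    {m : ℝ} (hm : |m| < 1) : Summable (fun n : ℕ => a n * m ^ n) := by
  apply Summable.of_norm
  apply Summable.of_nonneg_of_le (fun n => norm_nonneg _) _ ((summable_aux k hm).mul_left C)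
  intro n
  rw [norm_mul, norm_pow, Real.norm_eq_abs, Real.norm_eq_abs]
  rw [← mul_assoc]
  apply mul_le_mul_of_nonneg_right (hb n) (by positivity)

set_option maxHeartbeats 1000000 in
lemma hasDerivAt_ps {a : ℕ → ℝ} {C : ℝ} {k : ℕ} (hb : ∀ n, |a n| ≤ C * ((n:ℝ)+1)^k)
    {m : ℝ} (hm : |m| < 1) :
    HasDerivAt (fun y => ∑' n : ℕ, a n * y ^ n) (∑' n : ℕ, ((n:ℝ)+1) * a (n+1) * m ^ n) m := by
  set ρ : ℝ := (1 + |m|) / 2 with hρdef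
  have hρ0 : 0 < ρ := by positivity
  have hρ1 : ρ < 1 := by
    rw [hρdef]; linarith [hm]
  have hmρ : |m| < ρ := by rw [hρdef]; linarith [hm]
  have hC0 : 0 ≤ C := le_trans (abs_nonneg (a 0)) (by simpa using hb 0)
  set u : ℕ → ℝ := fun n => (C / ρ) * (((n:ℝ)+1)^(k+1) * ρ ^ n) with hu
  have husum : Summable u := by
    have h := summable_aux (k+1) (m := ρ) (by rwa [abs_of_pos hρ0])
    simp only [abs_of_pos hρ0] at h
    exact h.mul_left _
  have key : ∀ n : ℕ, ∀ y : ℝ, |y| ≤ ρ → |a n * ((n:ℝ) * y ^ (n-1))| ≤ u n := by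
    intro n y hy
    rw [abs_mul, abs_mul, abs_pow]
    have h1 : |y|^(n-1) ≤ ρ^n / ρ := by
      cases n with
      | zero => simp only [Nat.zero_sub, pow_zero]
                rw [le_div_iff₀ hρ0, one_mul]; exact hρ1.le
      | succ n => simp only [Nat.add_sub_cancel]
                  rw [pow_succ, mul_div_assoc, div_self (ne_of_gt hρ0), mul_one]
                  exact pow_le_pow_left₀ (abs_nonneg y) hy n
    have h2 : |(n:ℝ)| ≤ ((n:ℝ)+1) := by rw [abs_of_nonneg (Nat.cast_nonneg n)]; linarith
    calc |a n| * (|(n:ℝ)| * |y|^(n-1))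
        ≤ (C * ((n:ℝ)+1)^k) * (((n:ℝ)+1) * (ρ^n / ρ)) := by
          apply mul_le_mul (hb n) _ (by positivity) (by positivity)
          apply mul_le_mul h2 h1 (by positivity) (by positivity)
      _ = u n := by rw [hu]; field_simp; ring
  have hderiv : HasDerivAt (fun y => ∑' n : ℕ, a n * y ^ n)
      (∑' n : ℕ, a n * ((n:ℝ) * m ^ (n-1))) m := by
    have hmem : m ∈ Ioo (-ρ) ρ := by
      have := abs_lt.mp hmρ
      exact ⟨this.1, this.2⟩
    have h0mem : (0:ℝ) ∈ Ioo (-ρ) ρ := ⟨by linarith, by linarith⟩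
    exact hasDerivAt_tsum_of_isPreconnected (u := u)
      (g := fun n y => a n * y ^ n) (g' := fun n y => a n * ((n:ℝ) * y ^ (n-1)))
      husum (isOpen_Ioo (a := -ρ) (b := ρ)) isPreconnected_Ioo
      (fun n y _ => (hasDerivAt_pow n y).const_mul (a n))
      (fun n y hy => by
        rw [Real.norm_eq_abs]
        exact key n y (le_of_lt (abs_lt.mpr ⟨hy.1, hy.2⟩)))
      h0mem (summable_ps hb (by norm_num)) hmem
  convert hderiv using 1
  have hsum : Summable (fun n : ℕ => a n * ((n:ℝ) * m ^ (n-1))) := by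
    apply Summable.of_norm
    apply Summable.of_nonneg_of_le (fun n => norm_nonneg _) _ husum
    intro n
    rw [Real.norm_eq_abs]
    exact key n m hmρ.le
  rw [Summable.tsum_eq_zero_add hsum]
  simp only [Nat.cast_zero, zero_mul, mul_zero, zero_add]
  apply tsum_congr
  intro n
  simp only [Nat.cast_add, Nat.cast_one, Nat.add_sub_cancel]
  ring

noncomputable def ff (m : ℝ) : ℝ := ∑' n : ℕ, cc n * m ^ n
noncomputable def ff1 (m : ℝ) : ℝ := ∑' n : ℕ, ((n:ℝ)+1) * cc (n+1) * m ^ n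
noncomputable def ff2 (m : ℝ) : ℝ := ∑' n : ℕ, ((n:ℝ)+2) * ((n:ℝ)+1) * cc (n+2) * m ^ n

lemma cc_abs (n : ℕ) : |cc n| = cc n := abs_of_pos (cc_pos n)

lemma hb0 : ∀ n : ℕ, |cc n| ≤ 1 * ((n:ℝ)+1)^0 := by
  intro n; rw [cc_abs]; simpa using cc_le_one n

lemma hb1 : ∀ n : ℕ, |((n:ℝ)+1) * cc (n+1)| ≤ 1 * ((n:ℝ)+1)^1 := by
  intro n
  rw [abs_mul, cc_abs, abs_of_nonneg (by positivity : (0:ℝ) ≤ (n:ℝ)+1)]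
  have := cc_le_one (n+1)
  have := cc_pos (n+1)
  nlinarith [Nat.cast_nonneg (α := ℝ) n]

lemma hb2 : ∀ n : ℕ, |((n:ℝ)+2) * ((n:ℝ)+1) * cc (n+2)| ≤ 2 * ((n:ℝ)+1)^2 := by
  intro n
  rw [abs_mul, abs_mul, cc_abs, abs_of_nonneg (by positivity : (0:ℝ) ≤ (n:ℝ)+2),
    abs_of_nonneg (by positivity : (0:ℝ) ≤ (n:ℝ)+1)]
  have h1 := cc_le_one (n+2)
  have h2 := cc_pos (n+2)
  nlinarith [Nat.cast_nonneg (α := ℝ) n]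

lemma hb3 : ∀ n : ℕ, |(n:ℝ) * cc n| ≤ 1 * ((n:ℝ)+1)^1 := by
  intro n
  rw [abs_mul, cc_abs, abs_of_nonneg (Nat.cast_nonneg n)]
  have h1 := cc_le_one n
  have h2 := cc_pos n
  nlinarith [Nat.cast_nonneg (α := ℝ) n]

lemma hbb : ∀ n : ℕ, |((n:ℝ)+1) * (n:ℝ) * cc (n+1)| ≤ 1 * ((n:ℝ)+1)^2 := by
  intro n
  rw [abs_mul, abs_mul, cc_abs, abs_of_nonneg (by positivity : (0:ℝ) ≤ (n:ℝ)+1),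
    abs_of_nonneg (Nat.cast_nonneg n)]
  have h1 := cc_le_one (n+1)
  have h2 := cc_pos (n+1)
  nlinarith [Nat.cast_nonneg (α := ℝ) n]

lemma hbb2 : ∀ n : ℕ, |(n:ℝ) * ((n:ℝ)-1) * cc n| ≤ 1 * ((n:ℝ)+1)^2 := by
  intro n
  have h1 := cc_le_one n
  have h2 := cc_pos n
  have h3 : |(n:ℝ)| = (n:ℝ) := abs_of_nonneg (Nat.cast_nonneg n)
  have h4 : |(n:ℝ)-1| ≤ (n:ℝ)+1 := by
    rw [abs_le]; constructor <;> [linarith [Nat.cast_nonneg (α := ℝ) n]; linarith]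
  rw [abs_mul, abs_mul, cc_abs, h3]
  calc (n:ℝ) * |(n:ℝ)-1| * cc n ≤ ((n:ℝ)+1) * ((n:ℝ)+1) * 1 := by
        apply mul_le_mul _ h1 h2.le (by positivity)
        apply mul_le_mul (by linarith [Nat.cast_nonneg (α := ℝ) n]) h4 (abs_nonneg _) (by positivity)
    _ = 1 * ((n:ℝ)+1)^2 := by ring

lemma shift_tsum {b : ℕ → ℝ} (hsum : Summable b) (h0 : b 0 = 0) :
    ∑' n : ℕ, b (n+1) = ∑' n : ℕ, b n := by
  rw [Summable.tsum_eq_zero_add hsum, h0, zero_add]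

lemma hasDerivAt_ff {m : ℝ} (hm : |m| < 1) : HasDerivAt ff (ff1 m) m := hasDerivAt_ps hb0 hm

lemma hasDerivAt_ff1 {m : ℝ} (hm : |m| < 1) : HasDerivAt ff1 (ff2 m) m := by
  have h := hasDerivAt_ps hb1 hm
  convert h using 1
  · rfl
  apply tsum_congr
  intro n
  push_cast
  ring

-- key tsum rewrites
lemma mul_ff1 {m : ℝ} (hm : |m| < 1) : m * ff1 m = ∑' n : ℕ, (n:ℝ) * cc n * m ^ n := by
  rw [ff1, ← tsum_mul_left]
  rw [← shift_tsum (b := fun n => (n:ℝ) * cc n * m ^ n) (summable_ps hb3 hm) (by simp)]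
  apply tsum_congr
  intro n
  push_cast
  ring

lemma mul_ff2 {m : ℝ} (hm : |m| < 1) :
    m * ff2 m = ∑' n : ℕ, ((n:ℝ)+1) * (n:ℝ) * cc (n+1) * m ^ n := by
  rw [ff2, ← tsum_mul_left]
  rw [← shift_tsum (b := fun n => ((n:ℝ)+1) * (n:ℝ) * cc (n+1) * m ^ n)
    (summable_ps hbb hm) (by simp)]
  apply tsum_congr
  intro n
  push_cast
  ring

lemma mul2_ff2 {m : ℝ} (hm : |m| < 1) :
    m * (m * ff2 m) = ∑' n : ℕ, (n:ℝ) * ((n:ℝ)-1) * cc n * m ^ n := by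
  rw [mul_ff2 hm, ← tsum_mul_left]
  rw [← shift_tsum (b := fun n => (n:ℝ) * ((n:ℝ)-1) * cc n * m ^ n)
    (summable_ps hbb2 hm) (by simp)]
  apply tsum_congr
  intro n
  push_cast
  ring

lemma ode_ff {m : ℝ} (hm : |m| < 1) :
    m * (1-m) * ff2 m + (1-2*m) * ff1 m = ff m / 4 := by
  have e1 : m * (1-m) * ff2 m + (1-2*m) * ff1 m
      = (m * ff2 m - m * (m * ff2 m)) + (ff1 m - 2 * (m * ff1 m)) := by ring
  rw [e1, mul2_ff2 hm, mul_ff2 hm, mul_ff1 hm, ff1, ff]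
  have s1 := summable_ps hbb hm
  have s2 := summable_ps hbb2 hm
  have s3 := summable_ps hb1 hm
  have s4 := summable_ps hb3 hm
  rw [← Summable.tsum_sub s1 s2, ← tsum_mul_left (a := (2:ℝ)) (f := fun n : ℕ => (n:ℝ) * cc n * m ^ n), ← Summable.tsum_sub s3 ((s4).mul_left 2)]
  rw [← Summable.tsum_add ((s1).sub s2) ((s3).sub ((s4).mul_left 2))]
  rw [eq_div_iff (by norm_num : (4:ℝ) ≠ 0), ← tsum_mul_right]
  apply tsum_congr
  intro n
  have hrec : ((n:ℝ)+1)^2 * cc (n+1) = (2*(n:ℝ)+1)^2 * cc n / 4 := by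
    rw [cc_succ]
    have : ((n:ℝ)+1) ≠ 0 := by positivity
    field_simp
  have expand : ((n:ℝ)+1) * (n:ℝ) * cc (n+1) * m ^ n - (n:ℝ) * ((n:ℝ)-1) * cc n * m ^ n +
      (((n:ℝ)+1) * cc (n+1) * m ^ n - 2 * ((n:ℝ) * cc n * m ^ n))
      = (((n:ℝ)+1)^2 * cc (n+1)) * m ^ n - ((n:ℝ)*((n:ℝ)+1) * cc n) * m^n := by ring
  rw [expand, hrec]
  ring

-- CHUNK E
lemma abs_lt_one_of_Ico {m : ℝ} (hm : m ∈ Ico (0:ℝ) 1) : |m| < 1 := by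
  rw [abs_lt]; exact ⟨by linarith [hm.1], hm.2⟩

lemma ff_ge_one {m : ℝ} (hm : m ∈ Ico (0:ℝ) 1) : 1 ≤ ff m := by
  have hsum := summable_ps hb0 (abs_lt_one_of_Ico hm)
  have h := Summable.le_tsum hsum 0 (fun j _ => by
    have := (cc_pos j).le
    have := hm.1
    positivity)
  simpa [cc_zero, ff] using h

lemma ff_pos {m : ℝ} (hm : m ∈ Ico (0:ℝ) 1) : 0 < ff m :=
  lt_of_lt_of_le one_pos (ff_ge_one hm)

lemma ff1_pos {m : ℝ} (hm : m ∈ Ico (0:ℝ) 1) : 0 < ff1 m := by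
  have hsum := summable_ps hb1 (abs_lt_one_of_Ico hm)
  have h := Summable.le_tsum hsum 0 (fun j _ => by
    have := (cc_pos (j+1)).le
    have := hm.1
    positivity)
  have h0 : (0:ℝ) < ((0:ℕ):ℝ) + 1 := by norm_num
  calc (0:ℝ) < (((0:ℕ):ℝ)+1) * cc (0+1) * m ^ (0:ℕ) := by
        have := cc_pos 1
        simp
        linarith
    _ ≤ ff1 m := h

lemma key_pos {m : ℝ} (hm : m ∈ Ico (0:ℝ) 1) : 0 < ff m - 2*(1-m)*ff1 m := by
  have habs := abs_lt_one_of_Ico hm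
  have e1 : ff m - 2*(1-m)*ff1 m = ff m - 2 * ff1 m + 2 * (m * ff1 m) := by ring
  rw [e1, mul_ff1 habs, ff, ff1]
  have s0 := summable_ps hb0 habs
  have s1 := summable_ps hb1 habs
  have s3 := summable_ps hb3 habs
  rw [← tsum_mul_left (a := (2:ℝ)) (f := fun n : ℕ => ((n:ℝ)+1) * cc (n+1) * m ^ n),
      ← tsum_mul_left (a := (2:ℝ)) (f := fun n : ℕ => (n:ℝ) * cc n * m ^ n),
      ← Summable.tsum_sub s0 (s1.mul_left 2), ← Summable.tsum_add ((s0).sub (s1.mul_left 2)) (s3.mul_left 2)]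
  have hterm : ∀ n : ℕ, cc n * m ^ n - 2 * (((n:ℝ)+1) * cc (n+1) * m ^ n)
      + 2 * ((n:ℝ) * cc n * m ^ n) = ((2*(n:ℝ)+1)/(2*(n:ℝ)+2) * cc n) * m ^ n := by
    intro n
    have h1 : ((n:ℝ)+1) * cc (n+1) = (2*(n:ℝ)+1)^2 / (4*((n:ℝ)+1)) * cc n := by
      rw [cc_succ]
      have : ((n:ℝ)+1) ≠ 0 := by positivity
      field_simp
    rw [h1]
    have h2 : ((n:ℝ)+1) ≠ 0 := by positivity
    field_simp
    ring
  have hsum2 : Summable (fun n : ℕ => ((2*(n:ℝ)+1)/(2*(n:ℝ)+2) * cc n) * m ^ n) := by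
    apply summable_ps (C := 1) (k := 0) _ habs
    intro n
    rw [abs_mul, abs_of_pos (cc_pos n), abs_of_pos (by positivity : (0:ℝ) < (2*(n:ℝ)+1)/(2*(n:ℝ)+2))]
    simp only [pow_zero, mul_one]
    have h1 : (2*(n:ℝ)+1)/(2*(n:ℝ)+2) ≤ 1 := by
      rw [div_le_one (by positivity)]; linarith
    have := cc_le_one n
    have := (cc_pos n).le
    nlinarith
  calc (0:ℝ) < ((2*((0:ℕ):ℝ)+1)/(2*((0:ℕ):ℝ)+2) * cc 0) * m ^ (0:ℕ) := by
        rw [cc_zero]; norm_num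
    _ ≤ ∑' n : ℕ, ((2*(n:ℝ)+1)/(2*(n:ℝ)+2) * cc n) * m ^ n := by
        apply Summable.le_tsum hsum2 0
        intro j _
        have := (cc_pos j).le
        have := hm.1
        positivity
    _ = _ := by
        apply tsum_congr
        intro n
        rw [← hterm n]

-- CHUNK F
noncomputable def VV (m : ℝ) : ℝ := ff1 (1-m) * ff m + ff (1-m) * ff1 m
noncomputable def WW (m : ℝ) : ℝ := m * (1-m) * VV m
noncomputable def GG (m : ℝ) : ℝ := ff (1-m) / ff m

lemma abs_lt_one_of_Ioo {m : ℝ} (hm : m ∈ Ioo (0:ℝ) 1) : |m| < 1 := by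
  rw [abs_lt]; exact ⟨by linarith [hm.1], hm.2⟩

lemma one_sub_mem {m : ℝ} (hm : m ∈ Ioo (0:ℝ) 1) : 1 - m ∈ Ioo (0:ℝ) 1 :=
  ⟨by linarith [hm.2], by linarith [hm.1]⟩

lemma hasDerivAt_ff_comp {m : ℝ} (hm : |1-m| < 1) :
    HasDerivAt (fun x => ff (1-x)) (-ff1 (1-m)) m := by
  have h1 : HasDerivAt (fun x : ℝ => 1-x) (-1) m := by
    simpa using (hasDerivAt_id m).const_sub 1
  have := (hasDerivAt_ff hm).comp m h1
  simpa [Function.comp_def] using this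

lemma hasDerivAt_ff1_comp {m : ℝ} (hm : |1-m| < 1) :
    HasDerivAt (fun x => ff1 (1-x)) (-ff2 (1-m)) m := by
  have h1 : HasDerivAt (fun x : ℝ => 1-x) (-1) m := by
    simpa using (hasDerivAt_id m).const_sub 1
  have := (hasDerivAt_ff1 hm).comp m h1
  simpa [Function.comp_def] using this

lemma hasDerivAt_WW {m : ℝ} (hm : m ∈ Ioo (0:ℝ) 1) : HasDerivAt WW 0 m := by
  have h1 := abs_lt_one_of_Ioo hm
  have h2 := abs_lt_one_of_Ioo (one_sub_mem hm)
  have hV : HasDerivAt VV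
      ((-ff2 (1-m)) * ff m + ff1 (1-m) * ff1 m +
        ((-ff1 (1-m)) * ff1 m + ff (1-m) * ff2 m)) m := by
    exact ((hasDerivAt_ff1_comp h2).mul (hasDerivAt_ff h1)).add
      ((hasDerivAt_ff_comp h2).mul (hasDerivAt_ff1 h1))
  have hq : HasDerivAt (fun x : ℝ => x * (1-x)) (1 - 2*m) m := by
    have := (hasDerivAt_id m).mul ((hasDerivAt_id m).const_sub 1)
    refine this.congr_deriv ?_
    simp only [id_eq]
    ring
  have hW := hq.mul hV
  have hode1 := ode_ff h1
  have hode2 := ode_ff h2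
  have : (1 - 2*m) * VV m + m * (1-m) *
      ((-ff2 (1-m)) * ff m + ff1 (1-m) * ff1 m +
        ((-ff1 (1-m)) * ff1 m + ff (1-m) * ff2 m)) = 0 := by
    unfold VV
    linear_combination (ff (1-m)) * hode1 - (ff m) * hode2
  rw [show (0:ℝ) = (1 - 2*m) * VV m + m * (1-m) *
      ((-ff2 (1-m)) * ff m + ff1 (1-m) * ff1 m +
        ((-ff1 (1-m)) * ff1 m + ff (1-m) * ff2 m)) from this.symm]
  exact hW

lemma WW_const {a b : ℝ} (ha : a ∈ Ioo (0:ℝ) 1) (hb : b ∈ Ioo (0:ℝ) 1) (hab : a ≤ b) :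
    WW b = WW a := by
  have hsub : Icc a b ⊆ Ioo (0:ℝ) 1 := fun x hx => ⟨lt_of_lt_of_le ha.1 hx.1, lt_of_le_of_lt hx.2 hb.2⟩
  have hcont : ContinuousOn WW (Icc a b) := fun x hx =>
    ((hasDerivAt_WW (hsub hx)).continuousAt).continuousWithinAt
  have hderiv : ∀ x ∈ Ico a b, HasDerivWithinAt WW 0 (Ici x) x := fun x hx =>
    (hasDerivAt_WW (hsub ⟨hx.1, hx.2.le⟩)).hasDerivWithinAt
  exact constant_of_has_deriv_right_zero hcont hderiv b (right_mem_Icc.mpr hab)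

lemma WW_eq {m : ℝ} (hm : m ∈ Ioo (0:ℝ) 1) : WW m = WW (1/2) := by
  have h12 : (1/2 : ℝ) ∈ Ioo (0:ℝ) 1 := by norm_num
  rcases le_total m (1/2) with h | h
  · exact (WW_const hm h12 h).symm
  · exact WW_const h12 hm h

lemma WW_half_pos : 0 < WW (1/2) := by
  have h12 : (1/2 : ℝ) ∈ Ico (0:ℝ) 1 := by norm_num
  have h12' : (1-1/2 : ℝ) ∈ Ico (0:ℝ) 1 := by norm_num
  have := ff_pos h12
  have := ff1_pos h12
  have := ff_pos h12'
  have := ff1_pos h12'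
  unfold WW VV
  nlinarith

lemma WW_pos {m : ℝ} (hm : m ∈ Ioo (0:ℝ) 1) : 0 < WW m := WW_eq hm ▸ WW_half_pos

lemma VV_eq {m : ℝ} (hm : m ∈ Ioo (0:ℝ) 1) : VV m = WW (1/2) / (m * (1-m)) := by
  have hne : m * (1-m) ≠ 0 := ne_of_gt (by nlinarith [hm.1, hm.2])
  rw [eq_div_iff hne, ← WW_eq hm]
  unfold WW
  ring

lemma hasDerivAt_GG {m : ℝ} (hm : m ∈ Ioo (0:ℝ) 1) :
    HasDerivAt GG (-VV m / (ff m)^2) m := by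
  have h1 := abs_lt_one_of_Ioo hm
  have h2 := abs_lt_one_of_Ioo (one_sub_mem hm)
  have hf0 : ff m ≠ 0 := ne_of_gt (ff_pos ⟨hm.1.le, hm.2⟩)
  have := (hasDerivAt_ff_comp h2).div (hasDerivAt_ff h1) hf0
  refine HasDerivAt.congr_deriv this ?_
  unfold VV
  field_simp
  ring

-- M(m) = (1-m) * ff m ^ 2 strictly decreasing
noncomputable def MM (m : ℝ) : ℝ := (1-m) * (ff m)^2

lemma hasDerivAt_MM {m : ℝ} (hm : m ∈ Ioo (0:ℝ) 1) :
    HasDerivAt MM (-(ff m) * (ff m - 2*(1-m)*ff1 m)) m := by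
  have h1 := abs_lt_one_of_Ioo hm
  have hd : HasDerivAt (fun x : ℝ => (1-x) * (ff x)^2)
      ((-1) * (ff m)^2 + (1-m) * (2 * ff m ^ (2-1) * ff1 m)) m := by
    exact (((hasDerivAt_id m).const_sub 1)).mul ((hasDerivAt_ff h1).pow 2)
  convert hd using 1
  · rfl
  norm_num
  ring

lemma MM_strictAnti : StrictAntiOn MM (Ioo (0:ℝ) 1) := by
  apply strictAntiOn_of_deriv_neg (convex_Ioo 0 1)
  · intro x hx
    exact ((hasDerivAt_MM hx).continuousAt).continuousWithinAt
  · intro x hx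
    rw [interior_Ioo] at hx
    rw [(hasDerivAt_MM hx).deriv]
    have hfp := ff_pos (⟨hx.1.le, hx.2⟩ : x ∈ Ico (0:ℝ) 1)
    have hkp := key_pos (⟨hx.1.le, hx.2⟩ : x ∈ Ico (0:ℝ) 1)
    nlinarith

-- CHUNK G1 : divergence
lemma cc_ge (n : ℕ) (hn : 1 ≤ n) : 1/(4*(n:ℝ)) ≤ cc n := by
  induction n with
  | zero => omega
  | succ n ih =>
    rcases Nat.eq_or_lt_of_le hn with h | h
    · have : n = 0 := by omega
      subst this
      rw [cc_succ, cc_zero]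
      norm_num
    · have hn1 : 1 ≤ n := by omega
      have ihh := ih hn1
      rw [cc_succ]
      have hnr : (1:ℝ) ≤ (n:ℝ) := by exact_mod_cast hn1
      have h1 : 0 < (n:ℝ) := by linarith
      have h2 : (0:ℝ) < ((n:ℝ)+1) := by linarith
      have hfac : (0:ℝ) < (2*(n:ℝ)+1)^2 / (4*((n:ℝ)+1)^2) := by positivity
      have step : 1/(4*((n:ℝ)+1)) ≤ (1/(4*(n:ℝ))) * ((2*(n:ℝ)+1)^2 / (4*((n:ℝ)+1)^2)) := by
        rw [div_mul_div_comm, one_mul, div_le_div_iff₀ (by positivity) (by positivity)]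
        nlinarith
      have step2 : (1/(4*(n:ℝ))) * ((2*(n:ℝ)+1)^2 / (4*((n:ℝ)+1)^2))
          ≤ cc n * ((2*(n:ℝ)+1)^2 / (4*((n:ℝ)+1)^2)) :=
        mul_le_mul_of_nonneg_right ihh hfac.le
      push_cast
      exact le_trans step step2

lemma cc_partial_unbounded (b : ℝ) : ∃ N : ℕ, b ≤ ∑ i ∈ Finset.range N, cc i := by
  have hharm := Real.tendsto_sum_range_one_div_nat_succ_atTop
  have h4b := (tendsto_atTop.mp hharm) (4*b)
  rcases h4b.exists with ⟨N, hN⟩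
  refine ⟨N+1, ?_⟩
  rw [Finset.sum_range_succ']
  have key : ∀ i ∈ Finset.range N, (1/4 : ℝ) * (1/((i:ℝ)+1)) ≤ cc (i+1) := by
    intro i _
    have h := cc_ge (i+1) (by omega)
    push_cast at h
    have e : (1/4:ℝ) * (1/((i:ℝ)+1)) = 1/(4*((i:ℝ)+1)) := by rw [div_mul_div_comm]; norm_num
    rw [e]
    exact h
  have h1 : (1/4:ℝ) * ∑ i ∈ Finset.range N, (1/((i:ℝ)+1)) ≤ ∑ i ∈ Finset.range N, cc (i+1) := by
    rw [Finset.mul_sum]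
    exact Finset.sum_le_sum key
  have h2 : b ≤ (1/4:ℝ) * ∑ i ∈ Finset.range N, (1/((i:ℝ)+1)) := by linarith
  have h3 : (0:ℝ) ≤ cc 0 := (cc_pos 0).le
  linarith

lemma ff_tendsto_atTop : Tendsto ff (𝓝[<] (1:ℝ)) atTop := by
  rw [tendsto_atTop]
  intro b
  obtain ⟨N, hN⟩ := cc_partial_unbounded (b+1)
  set P : ℝ → ℝ := fun v => ∑ i ∈ Finset.range N, cc i * v ^ i with hP
  have hPcont : Continuous P := by
    apply continuous_finset_sum
    intro i _
    exact continuous_const.mul (continuous_pow i)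
  have hP1 : b < P 1 := by
    simp only [hP, one_pow, mul_one]
    linarith
  have hopen : ∀ᶠ v in 𝓝 (1:ℝ), b < P v :=
    (isOpen_lt continuous_const hPcont).eventually_mem hP1
  have hev1 : ∀ᶠ v in 𝓝[<] (1:ℝ), b < P v := eventually_nhdsWithin_of_eventually_nhds hopen
  have hev2 : ∀ᶠ v in 𝓝[<] (1:ℝ), v ∈ Ioo (0:ℝ) 1 := by
    have h1 : ∀ᶠ v in 𝓝[<] (1:ℝ), v < 1 := eventually_mem_nhdsWithin
    have h2 : ∀ᶠ v in 𝓝[<] (1:ℝ), (0:ℝ) < v :=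
      eventually_nhdsWithin_of_eventually_nhds (eventually_gt_nhds one_pos)
    filter_upwards [h1, h2] with v hv1 hv2
    exact ⟨hv2, hv1⟩
  filter_upwards [hev1, hev2] with v hv hvm
  have habs : |v| < 1 := by rw [abs_lt]; exact ⟨by linarith [hvm.1], hvm.2⟩
  have hle : P v ≤ ff v := by
    apply Summable.sum_le_tsum (Finset.range N)
    · intro i _
      have := (cc_pos i).le
      have := hvm.1.le
      positivity
    · exact summable_ps hb0 habs
  linarith

-- CHUNK H
lemma helper (Wc u w A B fA fB : ℝ) (hWc : 0 < Wc) (hu : 0 < u) (hw : 0 < w)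
    (hA : 0 < A) (hB : 0 < B) (hfA : 0 < fA) (hfB : 0 < fB)
    (hlt : A * fA^2 < B * fB^2) :
    -(Wc/(w*A))/fA^2 - -(Wc/(u*w*B))/fB^2 * u < 0 := by
  have E1 : -(Wc/(w*A))/fA^2 = -(Wc/(w*(A*fA^2))) := by
    rw [neg_div, div_div, mul_assoc]
  have E2 : -(Wc/(u*w*B))/fB^2 * u = -(Wc/(w*(B*fB^2))) := by
    rw [neg_div, div_div, neg_mul, div_mul_eq_mul_div, mul_comm Wc u,
      show u*w*B*fB^2 = u*(w*(B*fB^2)) by ring, mul_div_mul_left _ _ (ne_of_gt hu)]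
  rw [E1, E2]
  have hkey : Wc/(w*(B*fB^2)) < Wc/(w*(A*fA^2)) := by
    apply div_lt_div_of_pos_left hWc (by positivity) (by
      apply mul_lt_mul_of_pos_left hlt hw)
  linarith

lemma ff_zero : ff 0 = 1 := by
  rw [ff, tsum_eq_single 0]
  · simp [cc_zero]
  · intro n hn
    simp [zero_pow hn]

lemma GG_tendsto_zero : Tendsto GG (𝓝[<] (1:ℝ)) (𝓝 0) := by
  have hnum : Tendsto (fun v : ℝ => ff (1-v)) (𝓝[<] (1:ℝ)) (𝓝 (ff 0)) := by
    have hc : ContinuousAt ff 0 := (hasDerivAt_ff (by norm_num : |(0:ℝ)| < 1)).continuousAt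
    have hin : Tendsto (fun v : ℝ => 1 - v) (𝓝[<] (1:ℝ)) (𝓝 0) := by
      have : Tendsto (fun v : ℝ => 1 - v) (𝓝 (1:ℝ)) (𝓝 (1-1)) :=
        (continuous_const.sub continuous_id).tendsto 1
      simpa using this.mono_left nhdsWithin_le_nhds
    exact hc.tendsto.comp hin
  have := hnum.div_atTop ff_tendsto_atTop
  exact this

lemma mul_mem_Ioo {u w : ℝ} (hu : u ∈ Ioo (0:ℝ) 1) (hw : w ∈ Ioo (0:ℝ) 1) :
    u * w ∈ Ioo (0:ℝ) 1 := by
  constructor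
  · exact mul_pos hu.1 hw.1
  · nlinarith [hu.1, hu.2, hw.1, hw.2]

lemma GG_super {u v : ℝ} (hu : u ∈ Ioo (0:ℝ) 1) (hv : v ∈ Ioo (0:ℝ) 1) :
    GG (u*v) < GG u + GG v := by
  set h : ℝ → ℝ := fun w => GG u + GG w - GG (u*w) with hh
  have hderiv : ∀ w ∈ Ioo (0:ℝ) 1,
      HasDerivAt h (-VV w / (ff w)^2 - (-VV (u*w) / (ff (u*w))^2) * u) w := by
    intro w hw
    have huw := mul_mem_Ioo hu hw
    have h1 : HasDerivAt (fun w => GG u + GG w) (-VV w / (ff w)^2) w :=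
      (hasDerivAt_GG hw).const_add (GG u)
    have hlin : HasDerivAt (fun w : ℝ => u * w) u w := by
      simpa using (hasDerivAt_id w).const_mul u
    have h2 : HasDerivAt (fun w => GG (u*w)) ((-VV (u*w) / (ff (u*w))^2) * u) w :=
      (hasDerivAt_GG huw).comp w hlin
    exact h1.sub h2
  have hderiv_neg : ∀ w ∈ Ioo (0:ℝ) 1,
      -VV w / (ff w)^2 - (-VV (u*w) / (ff (u*w))^2) * u < 0 := by
    intro w hw
    have huw := mul_mem_Ioo hu hw
    rw [VV_eq hw, VV_eq huw]
    have hfw := ff_pos (⟨hw.1.le, hw.2⟩ : w ∈ Ico (0:ℝ) 1)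
    have hfuw := ff_pos (⟨huw.1.le, huw.2⟩ : u*w ∈ Ico (0:ℝ) 1)
    have hMlt : (1-w) * (ff w)^2 < (1-u*w) * (ff (u*w))^2 := by
      have := MM_strictAnti huw hw (by nlinarith [hu.1, hu.2, hw.1])
      unfold MM at this
      exact this
    exact helper _ _ _ _ _ _ _ WW_half_pos hu.1 hw.1 (by linarith [hw.2])
      (by linarith [huw.2]) hfw hfuw hMlt
  have hanti : StrictAntiOn h (Ioo (0:ℝ) 1) := by
    apply strictAntiOn_of_deriv_neg (convex_Ioo 0 1)
    · intro x hx
      exact ((hderiv x hx).continuousAt).continuousWithinAt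
    · intro x hx
      rw [interior_Ioo] at hx
      rw [(hderiv x hx).deriv]
      exact hderiv_neg x hx
  have htends : Tendsto h (𝓝[<] (1:ℝ)) (𝓝 0) := by
    have h1 : Tendsto (fun w => GG (u*w)) (𝓝[<] (1:ℝ)) (𝓝 (GG u)) := by
      have hc : ContinuousAt GG u := (hasDerivAt_GG hu).continuousAt
      have hin : Tendsto (fun w : ℝ => u * w) (𝓝[<] (1:ℝ)) (𝓝 u) := by
        have : Tendsto (fun w : ℝ => u * w) (𝓝 (1:ℝ)) (𝓝 (u*1)) :=
          (continuous_const.mul continuous_id).tendsto 1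
        simpa using this.mono_left nhdsWithin_le_nhds
      exact hc.tendsto.comp hin
    have h2 : Tendsto (fun w => GG u + GG w) (𝓝[<] (1:ℝ)) (𝓝 (GG u + 0)) :=
      tendsto_const_nhds.add GG_tendsto_zero
    have := h2.sub h1
    simpa using this
  -- conclude
  set w₀ : ℝ := (v+1)/2 with hw₀
  have hw₀mem : w₀ ∈ Ioo (0:ℝ) 1 := by
    constructor <;> [linarith [hv.1]; linarith [hv.2]]
  have hvw₀ : v < w₀ := by rw [hw₀]; linarith [hv.2]
  have hstep : h w₀ < h v := hanti hv hw₀mem hvw₀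
  have hnonneg : 0 ≤ h w₀ := by
    apply le_of_tendsto htends
    have hmem : Ioo w₀ (1:ℝ) ∈ 𝓝[<] (1:ℝ) :=
      Ioo_mem_nhdsLT_of_mem ⟨hw₀mem.2, le_refl 1⟩
    filter_upwards [hmem] with w hw
    have hwmem : w ∈ Ioo (0:ℝ) 1 := ⟨lt_trans hw₀mem.1 hw.1, hw.2⟩
    exact (hanti hw₀mem hwmem hw.1).le
  have : 0 < h v := lt_of_le_of_lt hnonneg hstep
  rw [hh] at this
  simp only at this
  linarith

-- CHUNK I
lemma Ka_eq (r : ℝ) : Ka (1/2) r = (π/2) * ff (r^2) := by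
  unfold Ka ff
  congr 1
  apply tsum_congr
  intro n
  rw [show (1:ℝ) - 1/2 = 1/2 by norm_num]
  rw [pow_mul]
  unfold cc
  rw [div_pow]
  ring

lemma muG_eq {r : ℝ} (hr : r ∈ Ioo (0:ℝ) 1) : muG (1/2) r = (π/2) * GG (r^2) := by
  have h1 : Real.sin (π * (1/2)) = 1 := by
    rw [show π * (1/2) = π/2 by ring, Real.sin_pi_div_two]
  have hr2 : r^2 ∈ Ioo (0:ℝ) 1 := by
    constructor
    · exact pow_pos hr.1 2
    · nlinarith [hr.1, hr.2]
  have hs : Real.sqrt (1 - r^2) ^ 2 = 1 - r^2 := by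
    rw [sq_sqrt]; linarith [hr2.2]
  unfold muG GG
  rw [h1, Ka_eq, Ka_eq, hs]
  have hffpos : 0 < ff (r^2) := ff_pos ⟨hr2.1.le, hr2.2⟩
  have hpi : (π/2 : ℝ) ≠ 0 := by positivity
  rw [mul_div_mul_left _ _ hpi]
  rw [mul_one]


theorem mu_superadditive (r t : ℝ) (hr : r ∈ Set.Ioo (0:ℝ) 1) (ht : t ∈ Set.Ioo (0:ℝ) 1) :
    muG (1/2) (r * t) < muG (1/2) r + muG (1/2) t := by
  have hrt : r * t ∈ Ioo (0:ℝ) 1 := by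
    constructor
    · exact mul_pos hr.1 ht.1
    · nlinarith [hr.1, hr.2, ht.1, ht.2]
  rw [muG_eq hr, muG_eq ht, muG_eq hrt]
  have hr2 : r^2 ∈ Ioo (0:ℝ) 1 := ⟨pow_pos hr.1 2, by nlinarith [hr.1, hr.2]⟩
  have ht2 : t^2 ∈ Ioo (0:ℝ) 1 := ⟨pow_pos ht.1 2, by nlinarith [ht.1, ht.2]⟩
  have key := GG_super hr2 ht2
  have hsq : (r*t)^2 = r^2 * t^2 := by ring
  rw [hsq]
  have hpi : (0:ℝ) < π/2 := by positivity
  nlinarith [key, hpi]
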